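/- Fix d ≥ 3, p ∈ (0,1), a constant C > 0, and δ ∈ (0,1). Set κ := (2C·√((d−2)!)·√p/(1−p))^{1/(d−1)}, k₀ = k₀(n) := ⌊κ√n⌋ + 1, t₁ := C·√(n·C(n−2,d−2)·p), ℓ := log(4/δ), s(n,k₀) := (1−p)(k₀−1)·C(k₀−2,d−2), U_d := (d−1)(d−2), and V(n,k₀) := p(1−p)·Σ_{e ⊄ T} c_e(T)² for any set T ⊆ [n] with |T| = k₀, where c_e(T) := |e ∩ T|(|e ∩ T| − 1) and the sum runs over d-subsets e of [n] not contained in T. Then for all sufficiently large n: s(n,k₀) − (1/k₀)·[ √(2·V(n,k₀)·ℓ) + (2/3)·U_d·ℓ ] > t₁. -/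

import Mathlib

set_option maxHeartbeats 1000000


open MeasureTheory Filter Finset Matrix
open scoped ENNReal

namespace HPC

/-- Hyperedges: `d`-element subsets of `[n]`. -/
abbrev Edge (n d : ℕ) : Type := {e : Finset (Fin n) // e.card = d}

/-- A hyperedge configuration. -/
abbrev Config (n d : ℕ) : Type := Edge n d → Bool

instance {n : ℕ} : MeasurableSpace (Finset (Fin n)) := ⊤

/-- Bernoulli measure on `Bool` with success probability `p`. -/
noncomputable def bern (p : ℝ) : Measure Bool :=
  ENNReal.ofReal p • Measure.dirac true + ENNReal.ofReal (1 - p) • Measure.dirac false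

/-- Law of the indicator of hyperedge `e` when the planted set is `S`:
hyperedges inside `S` are present surely, the others with probability `p`. -/
noncomputable def edgeLaw (n d : ℕ) (p : ℝ) (S : Finset (Fin n)) (e : Edge n d) :
    Measure Bool :=
  if (e : Finset (Fin n)) ⊆ S then Measure.dirac true else bern p

/-- Conditional law of the configuration given the planted set `S`. -/
noncomputable def condLaw (n d : ℕ) (p : ℝ) (S : Finset (Fin n)) : Measure (Config n d) :=
  Measure.pi fun e => edgeLaw n d p S e

/-- Marginal law `P_k` of the configuration, the planted set being uniform of size `k`. -/
noncomputable def law (n d : ℕ) (p : ℝ) (k : ℕ) : Measure (Config n d) :=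
  (((univ : Finset (Finset (Fin n))).filter fun S => S.card = k).card : ℝ≥0∞)⁻¹ •
    ∑ S ∈ (univ : Finset (Finset (Fin n))).filter fun S => S.card = k, condLaw n d p S

/-- Joint law of the planted set (uniform of size `k`) and the configuration. -/
noncomputable def jointLaw (n d : ℕ) (p : ℝ) (k : ℕ) :
    Measure (Finset (Fin n) × Config n d) :=
  (((univ : Finset (Finset (Fin n))).filter fun S => S.card = k).card : ℝ≥0∞)⁻¹ •
    ∑ S ∈ (univ : Finset (Finset (Fin n))).filter fun S => S.card = k,
      Measure.map (fun H => (S, H)) (condLaw n d p S)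

/-- Adjacency matrix (pairwise co-occurrence counts) of a configuration. -/
noncomputable def adj (n d : ℕ) (H : Config n d) : Matrix (Fin n) (Fin n) ℝ :=
  Matrix.of fun i j =>
    if i = j then 0 else
      ∑ e : Edge n d,
        if i ∈ (e : Finset (Fin n)) ∧ j ∈ (e : Finset (Fin n)) ∧ H e = true then (1 : ℝ) else 0

/-- Null-model expectation `E₀[A]`. -/
noncomputable def expAdj (n d : ℕ) (p : ℝ) : Matrix (Fin n) (Fin n) ℝ :=
  Matrix.of fun i j => if i = j then 0 else ((n - 2).choose (d - 2) : ℝ) * p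

/-- Centered adjacency matrix `M = A − E₀[A]`. -/
noncomputable def centered (n d : ℕ) (p : ℝ) (H : Config n d) : Matrix (Fin n) (Fin n) ℝ :=
  adj n d H - expAdj n d p

/-- Spectral (ℓ²-operator) norm of a real square matrix. -/
noncomputable def specNorm {n : ℕ} (M : Matrix (Fin n) (Fin n) ℝ) : ℝ :=
  ‖LinearMap.toContinuousLinearMap (Matrix.toEuclideanLin M)‖

/-- Euclidean norm on `Fin n → ℝ`. -/
noncomputable def norm2 {n : ℕ} (v : Fin n → ℝ) : ℝ := Real.sqrt (∑ i, v i ^ 2)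

/-- Supremum norm on `Fin n → ℝ`. -/
noncomputable def normInf {n : ℕ} (v : Fin n → ℝ) : ℝ := ‖v‖

/-- Two-to-infinity norm: maximal Euclidean row norm. -/
noncomputable def norm2toInf {n : ℕ} (M : Matrix (Fin n) (Fin n) ℝ) : ℝ :=
  normInf fun i => norm2 (M i)

/-- `u` is a unit eigenvector of `M` for the eigenvalue `lam`, and `lam` is the
largest eigenvalue of `M`. -/
def IsTopEigenpair {n : ℕ} (M : Matrix (Fin n) (Fin n) ℝ) (lam : ℝ) (u : Fin n → ℝ) : Prop :=
  norm2 u = 1 ∧ M.mulVec u = lam • u ∧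
    ∀ (mu : ℝ) (v : Fin n → ℝ), v ≠ 0 → M.mulVec v = mu • v → mu ≤ lam

/-- `T` is a set of indices of `k` largest entries of `|u|` (ties broken arbitrarily). -/
def IsTopK {n : ℕ} (k : ℕ) (u : Fin n → ℝ) (T : Finset (Fin n)) : Prop :=
  T.card = k ∧ ∀ i ∈ T, ∀ j ∉ T, |u j| ≤ |u i|

/-- Normalized indicator vector `1_T / √|T|`. -/
noncomputable def uInd {n : ℕ} (T : Finset (Fin n)) : Fin n → ℝ :=
  fun i => if i ∈ T then (Real.sqrt T.card)⁻¹ else 0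

/-- Normalized indicator vector `1_S / √k`. -/
noncomputable def uStar {n : ℕ} (k : ℕ) (S : Finset (Fin n)) : Fin n → ℝ :=
  fun i => if i ∈ S then (Real.sqrt k)⁻¹ else 0

/-- `c_e(T) = |e ∩ T|·(|e ∩ T| − 1)`. -/
noncomputable def cE {n : ℕ} (e T : Finset (Fin n)) : ℝ :=
  ((e ∩ T).card : ℝ) * (((e ∩ T).card : ℝ) - 1)

/-- Co-membership matrix of a hyperedge. -/
noncomputable def coB {n : ℕ} (e : Finset (Fin n)) : Matrix (Fin n) (Fin n) ℝ :=
  Matrix.of fun i j => if i ≠ j ∧ i ∈ e ∧ j ∈ e then 1 else 0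

/-- `λ* = (1 − p)(k − 1)·C(k−2, d−2)`. -/
noncomputable def lamStar (d k : ℕ) (p : ℝ) : ℝ :=
  (1 - p) * ((k : ℝ) - 1) * ((k - 2).choose (d - 2) : ℝ)

noncomputable def wIn (n d k : ℕ) (p : ℝ) : ℝ :=
  ((k - 2).choose (d - 2) : ℝ) +
    p * (((n - 2).choose (d - 2) : ℝ) - ((k - 2).choose (d - 2) : ℝ))

noncomputable def wOut (n d : ℕ) (p : ℝ) : ℝ := p * ((n - 2).choose (d - 2) : ℝ)

/-- `M* = (w_in − w_out)·(1_S 1_Sᵀ − I_S)`, the conditional expectation `E_S[M]`. -/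
noncomputable def mStarOf (n d k : ℕ) (p : ℝ) (S : Finset (Fin n)) :
    Matrix (Fin n) (Fin n) ℝ :=
  Matrix.of fun i j =>
    (wIn n d k p - wOut n d p) *
      ((if i ∈ S then (1 : ℝ) else 0) * (if j ∈ S then 1 else 0) -
        if i = j ∧ i ∈ S then 1 else 0)

/-- Leave-one-out perturbation `B^{(m)} = Σ_{e ∋ m} (H_e − p)·B_e`. -/
noncomputable def bMat (n d : ℕ) (p : ℝ) (H : Config n d) (m : Fin n) :
    Matrix (Fin n) (Fin n) ℝ :=
  ∑ e : Edge n d,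
    if m ∈ (e : Finset (Fin n)) then
      ((if H e then (1 : ℝ) else 0) - p) • coB (e : Finset (Fin n))
    else 0

/-- `(lam, U)` is an orthonormal eigendecomposition of `A` with eigenvalues listed in
nonincreasing order. -/
def IsEigenDecomp {n : ℕ} (A : Matrix (Fin n) (Fin n) ℝ) (lam : Fin n → ℝ)
    (U : Fin n → Fin n → ℝ) : Prop :=
  (∀ i j, U i ⬝ᵥ U j = if i = j then (1 : ℝ) else 0) ∧
    (∀ i, A.mulVec (U i) = lam i • U i) ∧ Antitone lam

/-- Maximum of a real function over `Fin n`, `n > 0`. -/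
noncomputable def maxOver {n : ℕ} (hn : 0 < n) (f : Fin n → ℝ) : ℝ :=
  (univ : Finset (Fin n)).sup' ⟨⟨0, hn⟩, Finset.mem_univ _⟩ f

/-- `min_{i ≥ 2} |lam i − x|`, the minimum over non-leading indices. -/
noncomputable def minOffTop {n : ℕ} [NeZero n] (hn : 2 ≤ n) (lam : Fin n → ℝ) (x : ℝ) : ℝ :=
  ((univ : Finset (Fin n)).filter fun i => i ≠ 0).inf'
    ⟨⟨1, by omega⟩, by
      simp only [Finset.mem_filter, Finset.mem_univ, true_and, ne_eq]
      intro h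
      simpa using congrArg Fin.val h⟩
    fun i => |lam i - x|

end HPC

open HPC MeasureTheory Filter Finset Matrix
open scoped ENNReal Topology

/-- **Signal dominates the threshold.** With `k₀(n) = ⌊κ√n⌋ + 1`, for all sufficiently
large `n` the signal term exceeds the test threshold `t₁` plus the fluctuation terms. -/
lemma aux_card_pair_mem_le {n : ℕ} (d : ℕ) (P : Finset (Fin n) → Prop) [DecidablePred P]
    (i j : Fin n) (hij : i ≠ j) :
    ((univ : Finset (Finset (Fin n))).filter
        (fun e => (e.card = d ∧ P e) ∧ i ∈ e ∧ j ∈ e)).card ≤ n ^ (d - 2) := by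
  classical
  have hpair : ({i, j} : Finset (Fin n)).card = 2 := by
    rw [Finset.card_insert_of_notMem (by simp [hij]), Finset.card_singleton]
  calc ((univ : Finset (Finset (Fin n))).filter
        (fun e => (e.card = d ∧ P e) ∧ i ∈ e ∧ j ∈ e)).card
      ≤ ((univ : Finset (Fin n)).powersetCard (d - 2)).card := by
        apply Finset.card_le_card_of_injOn (fun e => e \ {i, j})
        · intro e he
          simp only [Finset.mem_coe, Finset.mem_filter, Finset.mem_univ, true_and] at he
          obtain ⟨⟨hcard, -⟩, hi, hj⟩ := he
          rw [Finset.mem_coe, Finset.mem_powersetCard]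
          refine ⟨Finset.subset_univ _, ?_⟩
          rw [Finset.card_sdiff_of_subset (by
            intro z hz; simp only [Finset.mem_insert, Finset.mem_singleton] at hz
            rcases hz with rfl | rfl <;> assumption), hpair, hcard]
        · intro e1 h1 e2 h2 h12
          simp only [Finset.mem_coe, Finset.mem_filter, Finset.mem_univ, true_and] at h1 h2
          have hs1 : ({i, j} : Finset (Fin n)) ⊆ e1 := by
            intro z hz; simp only [Finset.mem_insert, Finset.mem_singleton] at hz
            rcases hz with rfl | rfl
            exacts [h1.2.1, h1.2.2]
          have hs2 : ({i, j} : Finset (Fin n)) ⊆ e2 := by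
            intro z hz; simp only [Finset.mem_insert, Finset.mem_singleton] at hz
            rcases hz with rfl | rfl
            exacts [h2.2.1, h2.2.2]
          calc e1 = e1 \ {i, j} ∪ {i, j} := (Finset.sdiff_union_of_subset hs1).symm
            _ = e2 \ {i, j} ∪ {i, j} := by rw [show e1 \ {i, j} = e2 \ {i, j} from h12]
            _ = e2 := Finset.sdiff_union_of_subset hs2
    _ = (Fintype.card (Fin n)).choose (d - 2) := by
        rw [Finset.card_powersetCard, Finset.card_univ]
    _ ≤ n ^ (d - 2) := by rw [Fintype.card_fin]; exact Nat.choose_le_pow _ _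

theorem signal_dominates_threshold (d : ℕ) (hd : 3 ≤ d)
    (p : ℝ) (hp0 : 0 < p) (hp1 : p < 1)
    (C : ℝ) (hC : 0 < C) (δ : ℝ) (hδ0 : 0 < δ) (hδ1 : δ < 1) :
    ∀ᶠ n : ℕ in atTop, ∀ T : Finset (Fin n),
      T.card =
          ⌊(2 * C * Real.sqrt ((d - 2).factorial : ℝ) * Real.sqrt p / (1 - p)) ^
              ((1 : ℝ) / ((d : ℝ) - 1)) * Real.sqrt n⌋₊ + 1 →
      C * Real.sqrt ((n : ℝ) * ((n - 2).choose (d - 2) : ℝ) * p) <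
        (1 - p) * ((T.card : ℝ) - 1) * ((T.card - 2).choose (d - 2) : ℝ) -
          (T.card : ℝ)⁻¹ *
            (Real.sqrt (2 *
                  (p * (1 - p) *
                    ∑ e ∈ (univ : Finset (Finset (Fin n))).filter
                        (fun e => e.card = d ∧ ¬ e ⊆ T), cE e T ^ 2) *
                  Real.log (4 / δ)) +
              2 / 3 * (((d : ℝ) - 1) * ((d : ℝ) - 2)) * Real.log (4 / δ)) := by
  have hd2 : 2 ≤ d := by omega
  set r : ℕ := d - 2 with hrdef
  have hr1 : 1 ≤ r := by omega
  have hrd : r + 1 = d - 1 := by omega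
  have h1p : (0:ℝ) < 1 - p := by linarith
  set fct : ℝ := ((d-2).factorial : ℝ) with hfct
  have hfct0 : (0:ℝ) < fct := by positivity
  have hsf0 : (0:ℝ) < Real.sqrt fct := Real.sqrt_pos.2 hfct0
  set q : ℝ := 2 * C * Real.sqrt ((d - 2).factorial : ℝ) * Real.sqrt p / (1 - p) with hqdef
  have hq0 : 0 < q := by
    apply div_pos _ h1p
    have := Real.sqrt_pos.2 hp0
    positivity
  set a : ℝ := q ^ ((1 : ℝ) / ((d : ℝ) - 1)) with hadef
  have ha0 : 0 < a := Real.rpow_pos_of_pos hq0 _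
  have hdR : (1:ℝ) ≤ (d:ℝ) - 1 := by
    have : (3:ℝ) ≤ (d:ℝ) := by exact_mod_cast hd
    linarith
  have hapow : a ^ (r + 1) = q := by
    rw [hadef, ← Real.rpow_natCast (q ^ ((1:ℝ)/((d:ℝ)-1))) (r+1), ← Real.rpow_mul hq0.le]
    have hcast : ((r + 1 : ℕ) : ℝ) = (d:ℝ) - 1 := by
      rw [hrd]; push_cast [Nat.cast_sub (by omega : 1 ≤ d)]; ring
    rw [hcast, one_div, inv_mul_cancel₀ (by linarith : (d:ℝ) - 1 ≠ 0), Real.rpow_one]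
  set ℓ : ℝ := Real.log (4/δ) with hldef
  have hℓ0 : 0 < ℓ := Real.log_pos (by rw [lt_div_iff₀ hδ0]; linarith)
  set c : ℝ := C * Real.sqrt p / Real.sqrt fct with hcdef
  have hc0 : 0 < c := by
    have := Real.sqrt_pos.2 hp0; positivity
  set D : ℝ := (d:ℝ) * ((d:ℝ) - 1) with hDdef
  have hD0 : 0 < D := by
    have : (3:ℝ) ≤ (d:ℝ) := by exact_mod_cast hd
    rw [hDdef]; nlinarith
  set B₁ : ℝ := Real.sqrt (2 * (p * (1 - p) * D) * ℓ) with hB1def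
  have hB10 : 0 ≤ B₁ := Real.sqrt_nonneg _
  set B₂ : ℝ := 2/3 * (((d:ℝ) - 1) * ((d:ℝ) - 2)) * ℓ with hB2def
  have hB20 : 0 ≤ B₂ := by
    have h3 : (3:ℝ) ≤ (d:ℝ) := by exact_mod_cast hd
    have : (0:ℝ) ≤ ((d:ℝ) - 1) * ((d:ℝ) - 2) := by nlinarith
    positivity
  have h2c : (1 - p) * a ^ (r+1) / fct = 2 * c := by
    rw [hapow, hqdef, hcdef, hfct]
    have hfs : Real.sqrt ((d-2).factorial:ℝ) * Real.sqrt ((d-2).factorial:ℝ)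
        = ((d-2).factorial:ℝ) := Real.mul_self_sqrt (by positivity)
    have hsf : Real.sqrt ((d-2).factorial:ℝ) ≠ 0 := by positivity
    field_simp
    linear_combination hfs
  -- the normalized function and its limit
  set Φ : ℝ → ℝ := fun x => (1 - p) * ((a - 1/x) * (a - (d:ℝ)/x) ^ r) / fct
      - B₁ * x⁻¹ - B₂ * (x ^ (r+1))⁻¹ with hΦdef
  have hΦlim : Tendsto Φ atTop (nhds (2 * c)) := by
    have hinv : Tendsto (fun x : ℝ => x⁻¹) atTop (nhds 0) := tendsto_inv_atTop_zero
    have h1 : Tendsto (fun x : ℝ => a - 1/x) atTop (nhds a) := by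
      have := tendsto_const_nhds (x := a) (f := atTop (α := ℝ)) |>.sub hinv
      simpa [one_div] using this
    have h2 : Tendsto (fun x : ℝ => a - (d:ℝ)/x) atTop (nhds a) := by
      have hdx : Tendsto (fun x : ℝ => (d:ℝ) * x⁻¹) atTop (nhds ((d:ℝ) * 0)) :=
        tendsto_const_nhds.mul hinv
      have := tendsto_const_nhds (x := a) (f := atTop (α := ℝ)) |>.sub hdx
      simpa [div_eq_mul_inv] using this
    have h3 : Tendsto (fun x : ℝ => (a - (d:ℝ)/x) ^ r) atTop (nhds (a ^ r)) := h2.pow r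
    have hmain : Tendsto (fun x : ℝ => (1 - p) * ((a - 1/x) * (a - (d:ℝ)/x) ^ r) / fct)
        atTop (nhds ((1 - p) * (a * a ^ r) / fct)) :=
      (tendsto_const_nhds.mul (h1.mul h3)).div_const _
    have hb1 : Tendsto (fun x : ℝ => B₁ * x⁻¹) atTop (nhds (B₁ * 0)) :=
      tendsto_const_nhds.mul hinv
    have hb2 : Tendsto (fun x : ℝ => B₂ * (x ^ (r+1))⁻¹) atTop (nhds (B₂ * 0)) :=
      tendsto_const_nhds.mul (tendsto_pow_atTop (Nat.succ_ne_zero r)).inv_tendsto_atTop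
    have := (hmain.sub hb1).sub hb2
    have heq : (1 - p) * (a * a ^ r) / fct - B₁ * 0 - B₂ * 0 = 2 * c := by
      rw [← h2c, ← pow_succ']; ring
    rw [heq] at this
    exact this
  have hax : Tendsto (fun x : ℝ => a * x) atTop atTop :=
    Tendsto.const_mul_atTop ha0 tendsto_id
  have hev : ∀ᶠ x : ℝ in atTop, ((d:ℝ) + 1 ≤ x ∧ (d:ℝ) + 1 ≤ a * x) ∧ c < Φ x := by
    filter_upwards [eventually_ge_atTop ((d:ℝ)+1), hax.eventually_ge_atTop ((d:ℝ)+1),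
      hΦlim.eventually_const_lt (by linarith : c < 2*c)] with x h1 h2 h3
    exact ⟨⟨h1, h2⟩, h3⟩
  have hsqrt : Tendsto (fun n : ℕ => Real.sqrt (n:ℝ)) atTop atTop := by
    have h1 : Tendsto Real.sqrt atTop atTop :=
      (tendsto_rpow_atTop (by norm_num : (0:ℝ) < 1/2)).congr
        (fun x => (Real.sqrt_eq_rpow x).symm)
    exact h1.comp tendsto_natCast_atTop_atTop
  filter_upwards [hsqrt.eventually hev] with n hn T hT
  set x : ℝ := Real.sqrt (n:ℝ) with hxdef
  obtain ⟨⟨hxd, haxd⟩, hΦx⟩ := hn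
  have hdR3 : (3:ℝ) ≤ (d:ℝ) := by exact_mod_cast hd
  have hx0 : (0:ℝ) < x := by linarith
  have hax0 : (0:ℝ) < a * x := by linarith
  set k : ℕ := T.card with hkdef
  have hkfloor : k = ⌊a * x⌋₊ + 1 := hT
  have hk_gt : a * x < (k:ℝ) := by
    rw [hkfloor]; push_cast; exact Nat.lt_floor_add_one _
  have hk_lb : a * x - 1 < (k:ℝ) - 1 := by linarith
  have hkd : d + 2 ≤ k := by
    have : ((d:ℕ):ℝ) + 1 < (k:ℝ) := lt_of_le_of_lt haxd hk_gt
    exact_mod_cast Nat.succ_le_of_lt (by exact_mod_cast this)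
  have hk1 : 1 ≤ k := by omega
  have hkR1 : (1:ℝ) ≤ (k:ℝ) := by exact_mod_cast hk1
  -- P1 : threshold bound
  have hxsq : x ^ 2 = (n:ℝ) := Real.sq_sqrt (Nat.cast_nonneg n)
  have hP1 : C * Real.sqrt ((n:ℝ) * ((n-2).choose (d-2) : ℝ) * p) ≤ c * x ^ (r+1) := by
    have hch : (((n-2).choose (d-2) : ℕ) : ℝ) ≤ (n:ℝ) ^ r / fct := by
      calc (((n-2).choose (d-2) : ℕ) : ℝ) ≤ ((n-2:ℕ):ℝ) ^ (d-2) / ((d-2).factorial : ℝ) :=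
            Nat.choose_le_pow_div (d-2) (n-2)
        _ ≤ (n:ℝ) ^ r / fct := by
            rw [hfct, ← hrdef]
            gcongr
            exact_mod_cast Nat.sub_le n 2
    have harg : (n:ℝ) * ((n-2).choose (d-2) : ℝ) * p ≤ (x ^ (r+1)) ^ 2 * p / fct := by
      have hxpow : (x ^ (r+1)) ^ 2 = (n:ℝ) ^ (r+1) := by
        rw [← pow_mul, mul_comm (r+1) 2, pow_mul, hxsq]
      rw [hxpow, pow_succ']
      calc (n:ℝ) * ((n-2).choose (d-2) : ℝ) * p ≤ (n:ℝ) * ((n:ℝ) ^ r / fct) * p := by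
            gcongr
        _ = (n:ℝ) * (n:ℝ) ^ r * p / fct := by ring
    calc C * Real.sqrt ((n:ℝ) * ((n-2).choose (d-2) : ℝ) * p)
        ≤ C * Real.sqrt ((x ^ (r+1)) ^ 2 * p / fct) := by
          gcongr
      _ = c * x ^ (r+1) := by
          rw [hcdef]
          rw [show (x ^ (r+1)) ^ 2 * p / fct = (x ^ (r+1)) ^ 2 * (p / fct) by ring]
          rw [Real.sqrt_mul (sq_nonneg _), Real.sqrt_sq (by positivity),
            Real.sqrt_div hp0.le fct]
          ring
  -- notation for the edge family
  set F := (univ : Finset (Finset (Fin n))).filter (fun e => e.card = d ∧ ¬ e ⊆ T) with hFdef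
  -- P3 : sum bound
  have hsum1 : ∀ e ∈ F, cE e T ^ 2 ≤ D * cE e T := by
    intro e he
    simp only [hFdef, Finset.mem_filter, Finset.mem_univ, true_and] at he
    set m : ℝ := ((e ∩ T).card : ℝ) with hmdef
    have hm0 : (0:ℝ) ≤ m := Nat.cast_nonneg _
    have hmd : m ≤ (d:ℝ) := by
      rw [hmdef]
      exact_mod_cast (Finset.card_le_card (Finset.inter_subset_left)).trans he.1.le
    have hcE : cE e T = m * (m - 1) := rfl
    have hcE0 : 0 ≤ cE e T := by
      rw [hcE]
      rcases Nat.eq_zero_or_pos (e ∩ T).card with h | h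
      · simp [hmdef, h]
      · have : (1:ℝ) ≤ m := by rw [hmdef]; exact_mod_cast h
        nlinarith
    have hcED : cE e T ≤ D := by
      rw [hcE, hDdef]; nlinarith
    calc cE e T ^ 2 = cE e T * cE e T := sq (cE e T) ▸ by ring
      _ ≤ D * cE e T := mul_le_mul_of_nonneg_right hcED hcE0
  have hsum2 : ∑ e ∈ F, cE e T ≤ (k:ℝ) ^ 2 * (n:ℝ) ^ r := by
    have hnat : ∑ e ∈ F, ((e ∩ T).card * (e ∩ T).card - (e ∩ T).card) ≤ k ^ 2 * n ^ r := by
      have hstep : ∀ e ∈ F, (e ∩ T).card * (e ∩ T).card - (e ∩ T).card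
          = (T.offDiag.filter (fun pr => pr.1 ∈ e ∧ pr.2 ∈ e)).card := by
        intro e he
        rw [← Finset.offDiag_card]
        congr 1
        ext pr
        simp only [Finset.mem_offDiag, Finset.mem_filter, Finset.mem_inter]
        tauto
      rw [Finset.sum_congr rfl hstep]
      have hswap : ∑ e ∈ F, (T.offDiag.filter (fun pr => pr.1 ∈ e ∧ pr.2 ∈ e)).card
          = ∑ pr ∈ T.offDiag, (F.filter (fun e => pr.1 ∈ e ∧ pr.2 ∈ e)).card := by
        simp only [Finset.card_filter]
        rw [Finset.sum_comm]
      rw [hswap]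
      calc ∑ pr ∈ T.offDiag, (F.filter (fun e => pr.1 ∈ e ∧ pr.2 ∈ e)).card
          ≤ ∑ _pr ∈ T.offDiag, n ^ (d - 2) := by
            apply Finset.sum_le_sum
            intro pr hpr
            have hne : pr.1 ≠ pr.2 := (Finset.mem_offDiag.1 hpr).2.2
            rw [hFdef, Finset.filter_filter]
            exact aux_card_pair_mem_le d (fun e => ¬ e ⊆ T) pr.1 pr.2 hne
        _ = T.offDiag.card * n ^ (d - 2) := by rw [Finset.sum_const, smul_eq_mul]
        _ ≤ k ^ 2 * n ^ r := by
            rw [Finset.offDiag_card, ← hkdef, ← hrdef]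
            have : k * k - k ≤ k ^ 2 := by
              rw [pow_two]; omega
            exact Nat.mul_le_mul_right _ this
    have hcast : ∀ e ∈ F, cE e T = (((e ∩ T).card * (e ∩ T).card - (e ∩ T).card : ℕ) : ℝ) := by
      intro e _
      have hle : (e ∩ T).card ≤ (e ∩ T).card * (e ∩ T).card := by nlinarith [(e ∩ T).card.le_refl]
      rw [show cE e T = ((e ∩ T).card : ℝ) * (((e ∩ T).card : ℝ) - 1) from rfl]
      push_cast [Nat.cast_sub hle]
      ring
    rw [Finset.sum_congr rfl hcast, ← Nat.cast_sum]
    calc ((∑ e ∈ F, ((e ∩ T).card * (e ∩ T).card - (e ∩ T).card) : ℕ) : ℝ)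
        ≤ ((k ^ 2 * n ^ r : ℕ) : ℝ) := by exact_mod_cast hnat
      _ = (k:ℝ) ^ 2 * (n:ℝ) ^ r := by push_cast; ring
  have hsumsq : ∑ e ∈ F, cE e T ^ 2 ≤ D * ((k:ℝ) ^ 2 * (n:ℝ) ^ r) := by
    calc ∑ e ∈ F, cE e T ^ 2 ≤ ∑ e ∈ F, D * cE e T := Finset.sum_le_sum hsum1
      _ = D * ∑ e ∈ F, cE e T := by rw [Finset.mul_sum]
      _ ≤ D * ((k:ℝ) ^ 2 * (n:ℝ) ^ r) := by
          apply mul_le_mul_of_nonneg_left hsum2 hD0.le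
  have hkpos : (0:ℝ) < (k:ℝ) := by linarith
  have hV : 2 * (p * (1 - p) * ∑ e ∈ F, cE e T ^ 2) * ℓ ≤ (B₁ * ((k:ℝ) * x ^ r)) ^ 2 := by
    have hB1sq : B₁ ^ 2 = 2 * (p * (1 - p) * D) * ℓ := by
      rw [hB1def, Real.sq_sqrt (by positivity)]
    have hxr : (x ^ r) ^ 2 = (n:ℝ) ^ r := by
      rw [← pow_mul, mul_comm r 2, pow_mul, hxsq]
    have hexp : (B₁ * ((k:ℝ) * x ^ r)) ^ 2 = 2 * (p * (1 - p) * (D * ((k:ℝ)^2 * (n:ℝ)^r))) * ℓ := by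
      rw [mul_pow, mul_pow, hB1sq, hxr]; ring
    rw [hexp]
    gcongr
  have hsqrtV : Real.sqrt (2 * (p * (1 - p) * ∑ e ∈ F, cE e T ^ 2) * ℓ)
      ≤ B₁ * ((k:ℝ) * x ^ r) := by
    have h := Real.sqrt_le_sqrt hV
    rwa [Real.sqrt_sq (by positivity)] at h
  have hfluct : (k:ℝ)⁻¹ * (Real.sqrt (2 * (p * (1 - p) * ∑ e ∈ F, cE e T ^ 2) * ℓ) + B₂)
      ≤ B₁ * x ^ r + B₂ := by
    have h1 : Real.sqrt (2 * (p * (1 - p) * ∑ e ∈ F, cE e T ^ 2) * ℓ) + B₂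
        ≤ B₁ * ((k:ℝ) * x ^ r) + B₂ * (k:ℝ) := by
      have : B₂ ≤ B₂ * (k:ℝ) := le_mul_of_one_le_right hB20 hkR1
      linarith
    calc (k:ℝ)⁻¹ * (Real.sqrt (2 * (p * (1 - p) * ∑ e ∈ F, cE e T ^ 2) * ℓ) + B₂)
        ≤ (k:ℝ)⁻¹ * (B₁ * ((k:ℝ) * x ^ r) + B₂ * (k:ℝ)) := by
          apply mul_le_mul_of_nonneg_left h1 (by positivity)
      _ = B₁ * x ^ r + B₂ := by field_simp
  -- P2 : signal lower bound
  have hP2 : (1 - p) * (a * x - 1) * ((a * x - (d:ℝ)) ^ r / fct)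
      ≤ (1 - p) * ((k:ℝ) - 1) * (((k - 2).choose (d - 2) : ℕ) : ℝ) := by
    have hchoose : (a * x - (d:ℝ)) ^ r / fct ≤ (((k - 2).choose (d - 2) : ℕ) : ℝ) := by
      have hidx : k - 2 + 1 - (d - 2) = k - d + 1 := by omega
      have hple : (((k - d + 1 : ℕ)) : ℝ) ^ r / fct ≤ (((k - 2).choose (d - 2) : ℕ) : ℝ) := by
        have h := Nat.pow_le_choose (α := ℝ) (d - 2) (k - 2)
        rw [hidx] at h
        rw [hfct, hrdef]
        exact h
      have hcastidx : (((k - d + 1 : ℕ)) : ℝ) = (k:ℝ) - (d:ℝ) + 1 := by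
        push_cast [Nat.cast_sub (show d ≤ k by omega)]
        ring
      have hbase : (0:ℝ) ≤ a * x - (d:ℝ) := by linarith
      have hbase2 : a * x - (d:ℝ) ≤ (((k - d + 1 : ℕ)) : ℝ) := by
        rw [hcastidx]; linarith
      calc (a * x - (d:ℝ)) ^ r / fct
          ≤ (((k - d + 1 : ℕ)) : ℝ) ^ r / fct := by
            gcongr
        _ ≤ (((k - 2).choose (d - 2) : ℕ) : ℝ) := hple
    have h1 : (0:ℝ) ≤ 1 - p := h1p.le
    have h2 : (0:ℝ) ≤ a * x - 1 := by linarith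
    have h3 : a * x - 1 ≤ (k:ℝ) - 1 := by linarith
    have h4 : (0:ℝ) ≤ (a * x - (d:ℝ)) ^ r / fct := by
      apply div_nonneg _ hfct0.le
      apply pow_nonneg; linarith
    calc (1 - p) * (a * x - 1) * ((a * x - (d:ℝ)) ^ r / fct)
        ≤ (1 - p) * ((k:ℝ) - 1) * ((a * x - (d:ℝ)) ^ r / fct) := by
          apply mul_le_mul_of_nonneg_right _ h4
          apply mul_le_mul_of_nonneg_left h3 h1
      _ ≤ (1 - p) * ((k:ℝ) - 1) * (((k - 2).choose (d - 2) : ℕ) : ℝ) := by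
          apply mul_le_mul_of_nonneg_left hchoose
          apply mul_nonneg h1; linarith
  -- key algebraic identity
  have hxne : x ≠ 0 := hx0.ne'
  have hkey : Φ x * x ^ (r+1) = (1 - p) * (a * x - 1) * ((a * x - (d:ℝ)) ^ r / fct)
      - B₁ * x ^ r - B₂ := by
    have e1 : (a - 1/x) * x = a * x - 1 := by field_simp
    have e2 : (a - (d:ℝ)/x) * x = a * x - (d:ℝ) := by field_simp
    have e3 : (a - (d:ℝ)/x) ^ r * x ^ r = (a * x - (d:ℝ)) ^ r := by rw [← mul_pow, e2]
    have e4 : (x:ℝ)⁻¹ * x = 1 := inv_mul_cancel₀ hxne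
    have e5 : ((x:ℝ) ^ (r+1))⁻¹ * x ^ (r+1) = 1 := inv_mul_cancel₀ (pow_ne_zero _ hxne)
    calc Φ x * x ^ (r+1)
        = (1 - p) * (((a - 1/x) * x) * ((a - (d:ℝ)/x) ^ r * x ^ r)) / fct
            - B₁ * (x⁻¹ * x) * x ^ r - B₂ * ((x ^ (r+1))⁻¹ * x ^ (r+1)) := by
          simp only [hΦdef, pow_succ]
          ring
      _ = (1 - p) * (a * x - 1) * ((a * x - (d:ℝ)) ^ r / fct) - B₁ * x ^ r - B₂ := by
          rw [e1, e3, e4, e5]; ring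
  have hlt : c * x ^ (r+1) < Φ x * x ^ (r+1) :=
    mul_lt_mul_of_pos_right hΦx (pow_pos hx0 _)
  rw [hkey] at hlt
  -- finish
  have hgoalcast : ((k - 2).choose (d - 2) : ℝ) = (((k - 2).choose (d - 2) : ℕ) : ℝ) := rfl
  linarith [hP1, hP2, hfluct, hlt]
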